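/- Let F be a field with char F ≠ 2, α ∈ F with α ∉ {0,1}, ζ ∈ F a root of x² − (4α−2)x + 1, μ = −(1+ζ)/4, ν = −(1+ζ⁻¹)/4, and in 𝔍(α) set s = (1/(4(α−1)))(μ𝔞 + 𝔞·𝔟 + ν𝔟) and t = (1/(α(α−1)))(ν𝔞 + 𝔞·𝔟 + μ𝔟). Let ξ ∈ F \ {0} and suppose 𝔠 = ξs + (1/2)·1 + ξ⁻¹t (where 1 = (2/(α−1))σ is the identity of 𝔍(α)) is a primitive axis of Jordan type 1/2 in 𝔍(α). Then its Miyamoto involution satisfies τ_𝔠(s) = ξ⁻²t and τ_𝔠(t) = ξ²s. -/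

import Mathlib

namespace JordanHalf

variable {F : Type*} [Field F] {A : Type*} [AddCommGroup A] [Module F A]

/-- The `lam`-eigenspace of the adjoint map `ad_a` for the bilinear multiplication `mul`. -/
def eig (mul : A →ₗ[F] A →ₗ[F] A) (a : A) (lam : F) : Submodule F A :=
  Module.End.eigenspace (mul a) lam

/-- `a` is a primitive axis of Jordan type `1/2` for the multiplication `mul`. -/
def IsPrimitiveAxis (mul : A →ₗ[F] A →ₗ[F] A) (a : A) : Prop :=
  mul a a = a ∧
  (eig mul a 1 ⊔ eig mul a 0 ⊔ eig mul a (2⁻¹ : F) = ⊤) ∧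
  eig mul a 1 = Submodule.span F {a} ∧
  (∀ x ∈ eig mul a 1, ∀ y ∈ eig mul a 0, mul x y = 0) ∧
  (∀ x ∈ eig mul a 0, ∀ y ∈ eig mul a 0, mul x y ∈ eig mul a 0) ∧
  (∀ x ∈ eig mul a 1, ∀ y ∈ eig mul a (2⁻¹ : F), mul x y ∈ eig mul a (2⁻¹ : F)) ∧
  (∀ x ∈ eig mul a 0, ∀ y ∈ eig mul a (2⁻¹ : F), mul x y ∈ eig mul a (2⁻¹ : F)) ∧
  (∀ x ∈ eig mul a (2⁻¹ : F), ∀ y ∈ eig mul a (2⁻¹ : F),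
    mul x y ∈ eig mul a 1 ⊔ eig mul a 0)

/-- The multiplication of the 3-dimensional algebra `𝔍(α)` with respect to the basis
`𝔞 = ![1,0,0]`, `𝔟 = ![0,1,0]`, `σ = ![0,0,1]`. -/
def JmulFun (α : F) (u v : Fin 3 → F) : Fin 3 → F :=
  ![u 0 * v 0 + (u 0 * v 1 + u 1 * v 0) / 2 + (α - 1) / 2 * (u 0 * v 2 + u 2 * v 0),
    u 1 * v 1 + (u 0 * v 1 + u 1 * v 0) / 2 + (α - 1) / 2 * (u 1 * v 2 + u 2 * v 1),
    (u 0 * v 1 + u 1 * v 0) + (α - 1) / 2 * (u 2 * v 2)]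

/-- The multiplication of `𝔍(α)` bundled as a bilinear map. -/
def Jmul (α : F) : (Fin 3 → F) →ₗ[F] (Fin 3 → F) →ₗ[F] (Fin 3 → F) :=
  LinearMap.mk₂ F (JmulFun α)
    (by intro m₁ m₂ n; funext i; fin_cases i <;>
      simp [JmulFun, Pi.add_apply] <;> ring)
    (by intro c m n; funext i; fin_cases i <;>
      simp [JmulFun, Pi.smul_apply, smul_eq_mul] <;> ring)
    (by intro m n₁ n₂; funext i; fin_cases i <;>
      simp [JmulFun, Pi.add_apply] <;> ring)
    (by intro c m n; funext i; fin_cases i <;>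
      simp [JmulFun, Pi.smul_apply, smul_eq_mul] <;> ring)

set_option maxHeartbeats 1000000

/-- key scaled eigen identity -/
theorem key_eigen {F : Type*} [Field F] (hchar : (2:F) ≠ 0) (α μ ξ : F)
    (hrel : 4*μ^2 + 4*α*μ + α = 0) :
    JmulFun α
      ![α*ξ^2*(2*μ+1) + 4*(-2*α-2*μ+1), α*ξ^2*(-2*α-2*μ+1) + 4*(2*μ+1), 2*α*ξ^2 + 8 + 8*α*ξ]
      ![α*ξ^2*(2*μ+1) - 4*(-2*α-2*μ+1), α*ξ^2*(-2*α-2*μ+1) - 4*(2*μ+1), 2*α*ξ^2 - 8] =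
    (4*α*ξ*(α-1)) •
      ![α*ξ^2*(2*μ+1) - 4*(-2*α-2*μ+1), α*ξ^2*(-2*α-2*μ+1) - 4*(2*μ+1), 2*α*ξ^2 - 8] := by
  have hd : (2:F) * 2⁻¹ = 1 := mul_inv_cancel₀ hchar
  funext i
  fin_cases i <;> simp [JmulFun]
  · linear_combination (16 - 64*μ + 64*μ^2 - 64*α + 16*α*ξ + 128*α*μ - 32*α*μ*ξ + 64*α^2
      - 48*α^2*ξ - 4*α^2*ξ^3 - α^2*ξ^4 + 32*α^2*μ*ξ - 8*α^2*μ*ξ^3 - 4*α^2*μ*ξ^4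
      - 4*α^2*μ^2*ξ^4 + 32*α^3*ξ + 4*α^3*ξ^3 + 8*α^3*μ*ξ^3) * hd
  · linear_combination (16 + 64*μ + 64*μ^2 + 16*α*ξ + 32*α*μ*ξ - 16*α^2*ξ - 4*α^2*ξ^3
      - α^2*ξ^4 - 32*α^2*μ*ξ + 8*α^2*μ*ξ^3 + 4*α^2*μ*ξ^4 - 4*α^2*μ^2*ξ^4 + 12*α^3*ξ^3
      + 4*α^3*ξ^4 - 8*α^3*μ*ξ^3 - 8*α^3*μ*ξ^4 - 8*α^4*ξ^3 - 4*α^4*ξ^4) * hd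
  · linear_combination (32 - 32*α + 32*α*ξ - 32*α^2*ξ - 8*α^2*ξ^3 - 2*α^2*ξ^4 + 8*α^3*ξ^3
      + 2*α^3*ξ^4) * hd + (32 - 2*α^2*ξ^4) * hrel

end JordanHalf

open JordanHalf

set_option maxHeartbeats 1000000

/-- **Lemma (action on J).** In `𝔍(α)` with `α ∉ {0,1}`, `ζ` a root of
`x² − (4α−2)x + 1`, `μ = −(1+ζ)/4`, `ν = −(1+ζ⁻¹)/4`,
`s = (1/(4(α−1)))(μ𝔞 + 𝔞⬝𝔟 + ν𝔟)`, `t = (1/(α(α−1)))(ν𝔞 + 𝔞⬝𝔟 + μ𝔟)`, and identity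
`1 = (2/(α−1))σ`: if `𝔠 = ξs + ½·1 + ξ⁻¹t` (with `ξ ≠ 0`) is a primitive axis of
Jordan type `1/2`, then its Miyamoto involution `τ` satisfies `τ(s) = ξ⁻²t` and
`τ(t) = ξ²s`. -/
theorem miyamoto_action_on_J {F : Type*} [Field F] (hchar : (2 : F) ≠ 0)
    (α : F) (hα0 : α ≠ 0) (hα1 : α ≠ 1)
    (ζ : F) (hζ : ζ ^ 2 - (4 * α - 2) * ζ + 1 = 0)
    (μ ν : F) (hμ : μ = -(1 + ζ) / 4) (hν : ν = -(1 + ζ⁻¹) / 4)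
    (s t oneJ : Fin 3 → F)
    (hs : s = (4 * (α - 1))⁻¹ • (μ • ![1, 0, 0] + JmulFun α ![1, 0, 0] ![0, 1, 0] +
      ν • ![0, 1, 0]))
    (ht : t = (α * (α - 1))⁻¹ • (ν • ![1, 0, 0] + JmulFun α ![1, 0, 0] ![0, 1, 0] +
      μ • ![0, 1, 0]))
    (hone : oneJ = (2 / (α - 1)) • ![0, 0, 1])
    (ξ : F) (hξ : ξ ≠ 0) (c : Fin 3 → F)
    (hc : c = ξ • s + (2⁻¹ : F) • oneJ + ξ⁻¹ • t)
    (haxis : IsPrimitiveAxis (Jmul α) c)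
    (τ : (Fin 3 → F) →ₗ[F] (Fin 3 → F))
    (hτ1 : ∀ x ∈ eig (Jmul α) c 1, τ x = x)
    (hτ0 : ∀ x ∈ eig (Jmul α) c 0, τ x = x)
    (hτhalf : ∀ x ∈ eig (Jmul α) c (2⁻¹ : F), τ x = -x) :
    τ s = (ξ⁻¹) ^ 2 • t ∧ τ t = ξ ^ 2 • s := by
  have h4 : (4:F) ≠ 0 := by
    have : (4:F) = 2*2 := by norm_num
    rw [this]; exact mul_ne_zero hchar hchar
  have hα1' : α - 1 ≠ 0 := sub_ne_zero.2 hα1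
  have hζ0 : ζ ≠ 0 := by intro h; rw [h] at hζ; norm_num at hζ
  have hν' : ν = -α - μ := by
    rw [hμ, hν]; field_simp; linear_combination -1*hζ
  have hrel : 4*μ^2 + 4*α*μ + α = 0 := by
    rw [hμ]; field_simp; linear_combination 1*hζ
  -- explicit coordinates
  have hsv : s = ![(μ + 2⁻¹)/(4*(α-1)), (-α - μ + 2⁻¹)/(4*(α-1)), (4*(α-1))⁻¹] := by
    rw [hs, hν']; funext i; fin_cases i <;> simp [JmulFun] <;> field_simp [hchar, h4, hα0, hα1', hξ] <;> first
        | ring1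
        | (rw [eq_div_iff (by simp [mul_ne_zero_iff, hchar, h4, hα0, hα1', hξ])]; ring1)
        | (rw [div_eq_iff (by simp [mul_ne_zero_iff, hchar, h4, hα0, hα1', hξ])]; ring1)
        | (left; ring1)
        | tauto
  have htv : t = ![(-α - μ + 2⁻¹)/(α*(α-1)), (μ + 2⁻¹)/(α*(α-1)), (α*(α-1))⁻¹] := by
    rw [ht, hν']; funext i; fin_cases i <;> simp [JmulFun] <;> field_simp [hchar, h4, hα0, hα1', hξ] <;> first
        | ring1
        | (rw [eq_div_iff (by simp [mul_ne_zero_iff, hchar, h4, hα0, hα1', hξ])]; ring1)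
        | (rw [div_eq_iff (by simp [mul_ne_zero_iff, hchar, h4, hα0, hα1', hξ])]; ring1)
        | (left; ring1)
        | tauto
  have honev : oneJ = ![0, 0, 2/(α-1)] := by
    rw [hone]; funext i; fin_cases i <;> simp
  set D : F := 4*α*ξ*(α-1) with hD
  have hD0 : (2*D) ≠ 0 :=
    mul_ne_zero hchar (mul_ne_zero (mul_ne_zero (mul_ne_zero h4 hα0) hξ) hα1')
  set C : Fin 3 → F := ![α*ξ^2*(2*μ+1) + 4*(-2*α-2*μ+1),
      α*ξ^2*(-2*α-2*μ+1) + 4*(2*μ+1), 2*α*ξ^2 + 8 + 8*α*ξ] with hCdef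
  set W : Fin 3 → F := ![α*ξ^2*(2*μ+1) - 4*(-2*α-2*μ+1),
      α*ξ^2*(-2*α-2*μ+1) - 4*(2*μ+1), 2*α*ξ^2 - 8] with hWdef
  have hCc : C = (2*D) • c := by
    rw [hc, hsv, htv, honev]; funext i; fin_cases i <;>
      simp [hCdef, hD, JmulFun] <;> field_simp [hchar, h4, hα0, hα1', hξ] <;> first
        | ring1
        | (rw [eq_div_iff (by simp [mul_ne_zero_iff, hchar, h4, hα0, hα1', hξ])]; ring1)
        | (rw [div_eq_iff (by simp [mul_ne_zero_iff, hchar, h4, hα0, hα1', hξ])]; ring1)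
        | (left; ring1)
        | tauto
  have hWw : W = (2*D) • (ξ • s - ξ⁻¹ • t) := by
    rw [hsv, htv]; funext i; fin_cases i <;>
      simp [hWdef, hD, JmulFun] <;> field_simp [hchar, h4, hα0, hα1', hξ] <;> first
        | ring1
        | (rw [eq_div_iff (by simp [mul_ne_zero_iff, hchar, h4, hα0, hα1', hξ])]; ring1)
        | (rw [div_eq_iff (by simp [mul_ne_zero_iff, hchar, h4, hα0, hα1', hξ])]; ring1)
        | (left; ring1)
        | tauto
  -- the eigenvalue computation
  have hkey : Jmul α C W = D • W := key_eigen hchar α μ ξ hrel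
  have hw : Jmul α c (ξ • s - ξ⁻¹ • t) = (2⁻¹ : F) • (ξ • s - ξ⁻¹ • t) := by
    apply smul_right_injective (Fin 3 → F) (mul_ne_zero hD0 hD0)
    have h1 : Jmul α C W = (2*D) • ((2*D) • (Jmul α c (ξ • s - ξ⁻¹ • t))) := by
      rw [hCc, hWw]
      simp only [map_smul, LinearMap.smul_apply]
    have h2 : D • W = (2*D) • ((2*D) • ((2⁻¹:F) • (ξ • s - ξ⁻¹ • t))) := by
      rw [hWw]
      simp only [smul_smul]
      congr 1
      field_simp
    simp only [smul_smul] at h1 h2 ⊢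
    rw [← h1, hkey, h2]
    have hsc : (2*D*(2*D*2⁻¹)) = (2*D*(2*D)*2⁻¹ : F) := by ring
    rw [hsc]
  -- memberships
  have hmemw : (ξ • s - ξ⁻¹ • t) ∈ eig (Jmul α) c (2⁻¹ : F) := by
    rw [eig, Module.End.mem_eigenspace_iff]; exact hw
  have hmemc : c ∈ eig (Jmul α) c 1 := by
    rw [eig, Module.End.mem_eigenspace_iff, one_smul]; exact haxis.1
  have hcone : Jmul α c oneJ = c := by
    rw [honev]; funext i; fin_cases i <;>
      simp [Jmul, JmulFun] <;> field_simp [hchar, h4, hα0, hα1', hξ] <;> first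
        | ring1
        | (rw [eq_div_iff (by simp [mul_ne_zero_iff, hchar, h4, hα0, hα1', hξ])]; ring1)
        | (rw [div_eq_iff (by simp [mul_ne_zero_iff, hchar, h4, hα0, hα1', hξ])]; ring1)
        | (left; ring1)
        | tauto
  have hmem0 : oneJ - c ∈ eig (Jmul α) c 0 := by
    rw [eig, Module.End.mem_eigenspace_iff, zero_smul, map_sub, hcone, haxis.1, sub_self]
  -- tau values
  have hτc : τ c = c := hτ1 c hmemc
  have hτone : τ oneJ = oneJ := by
    have h := hτ0 _ hmem0
    rw [map_sub, hτc] at h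
    have h' := congrArg (· + c) h
    simpa using h'
  have hτw : τ (ξ • s - ξ⁻¹ • t) = -(ξ • s - ξ⁻¹ • t) := hτhalf _ hmemw
  have hu : (ξ • s + ξ⁻¹ • t) = c - (2⁻¹:F) • oneJ := by rw [hc]; module
  have hτu : τ (ξ • s + ξ⁻¹ • t) = ξ • s + ξ⁻¹ • t := by
    rw [hu, map_sub, map_smul, hτc, hτone]
  -- combine
  have hsum : τ (ξ • s) + τ (ξ⁻¹ • t) = ξ • s + ξ⁻¹ • t := by
    rw [← map_add]; exact hτu
  have hdiff : τ (ξ • s) - τ (ξ⁻¹ • t) = -(ξ • s) + (ξ⁻¹ • t) := by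
    rw [← map_sub, hτw]; module
  have hτξs : τ (ξ • s) = ξ⁻¹ • t := by
    have := congrArg₂ (· + ·) hsum hdiff
    have h2 : (2:F) • τ (ξ • s) = (2:F) • (ξ⁻¹ • t) := by
      rw [two_smul, two_smul]; linear_combination (norm := module) this
    exact smul_right_injective (Fin 3 → F) hchar h2
  have hτξt : τ (ξ⁻¹ • t) = ξ • s := by
    have := congrArg₂ (· - ·) hsum hdiff
    have h2 : (2:F) • τ (ξ⁻¹ • t) = (2:F) • (ξ • s) := by
      rw [two_smul, two_smul]; linear_combination (norm := module) this
    exact smul_right_injective (Fin 3 → F) hchar h2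
  constructor
  · have : τ s = ξ⁻¹ • (ξ⁻¹ • t) := by
      have hss : s = ξ⁻¹ • (ξ • s) := by rw [smul_smul, inv_mul_cancel₀ hξ, one_smul]
      rw [hss, map_smul, hτξs]
    rw [this, smul_smul, sq]
  · have : τ t = ξ • (ξ • s) := by
      have htt : t = ξ • (ξ⁻¹ • t) := by rw [smul_smul, mul_inv_cancel₀ hξ, one_smul]
      rw [htt, map_smul, hτξt]
    rw [this, smul_smul, sq]
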